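/- arXiv:0807.4203 — 3 statements merged into one kernel-verified Lean document; each statement's English description precedes it below -/
import Mathlib

section
/- Let k be a natural number, G = (ℤ/2ℤ)^k, A = F₂[G] its group algebra over F₂, and I ⊆ A the augmentation ideal. Then the (k+1)-st power of the augmentation ideal vanishes: I^{k+1} = 0. -/
/-!
Setting: `Gk k = (ℤ/2ℤ)^k` written multiplicatively; `Ak k = F₂[Gk k]` its group algebra over
`F₂ = ZMod 2`; `aug` the augmentation homomorphism and `augI` the augmentation ideal.
-/

noncomputable section

/-- The elementary abelian 2-group `(ℤ/2ℤ)^k`, written multiplicatively. -/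
abbrev Gk (k : ℕ) := Multiplicative (Fin k → ZMod 2)

/-- The group algebra `F₂[(ℤ/2ℤ)^k]`. -/
abbrev Ak (k : ℕ) := MonoidAlgebra (ZMod 2) (Gk k)

/-- The augmentation homomorphism `ε : F₂[G] → F₂`, `ε(∑ a_g · g) = ∑ a_g`. -/
def aug (k : ℕ) : Ak k →ₐ[ZMod 2] ZMod 2 :=
  MonoidAlgebra.lift (ZMod 2) (ZMod 2) (Gk k) 1

/-- The augmentation ideal `I = ker ε`. -/
def augI (k : ℕ) : Ideal (Ak k) := RingHom.ker (aug k).toRingHom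

/-- The distinguished generators of the augmentation ideal. -/
def xgen (k : ℕ) (i : Fin k) : Ak k :=
  MonoidAlgebra.of (ZMod 2) (Gk k) (Multiplicative.ofAdd (Pi.single i 1)) - 1

lemma two_eq_zero_Ak (k : ℕ) : (2 : Ak k) = 0 := by
  have h : (2 : Ak k) = algebraMap (ZMod 2) (Ak k) 2 := (map_ofNat _ 2).symm
  have h2 : (2 : ZMod 2) = 0 := by decide
  rw [h, h2, map_zero]

lemma of_sub_one_sq (k : ℕ) (g : Gk k) :
    (MonoidAlgebra.of (ZMod 2) (Gk k) g - 1) * (MonoidAlgebra.of (ZMod 2) (Gk k) g - 1) = 0 := by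
  have hg : g * g = 1 := by
    have : g.toAdd + g.toAdd = 0 := by
      funext i
      exact CharTwo.add_self_eq_zero _
    rw [← ofAdd_toAdd g, ← ofAdd_add, this, ofAdd_zero]
  have hof : MonoidAlgebra.of (ZMod 2) (Gk k) g * MonoidAlgebra.of (ZMod 2) (Gk k) g = 1 := by
    rw [← map_mul, hg, map_one]
  have h2 := two_eq_zero_Ak k
  set a := MonoidAlgebra.of (ZMod 2) (Gk k) g
  have h3 : (a - 1) * (a - 1) = a * a - 2 * a + 1 := by ring
  rw [h3, hof]
  linear_combination (1 - a) * h2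

lemma aug_of (k : ℕ) (g : Gk k) : aug k (MonoidAlgebra.of (ZMod 2) (Gk k) g) = 1 := by
  simp [aug]

lemma of_sub_one_mem_span (k : ℕ) (g : Gk k) :
    MonoidAlgebra.of (ZMod 2) (Gk k) g - 1 ∈ Ideal.span (Set.range (xgen k)) := by
  have key : ∀ s : Finset (Fin k),
      MonoidAlgebra.of (ZMod 2) (Gk k)
        (Multiplicative.ofAdd (∑ i ∈ s, Pi.single i (g.toAdd i))) - 1
        ∈ Ideal.span (Set.range (xgen k)) := by
    intro s
    induction s using Finset.induction_on with
    | empty =>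
      simp only [Finset.sum_empty, ofAdd_zero, map_one, sub_self]
      exact Ideal.zero_mem _
    | @insert j s hj ih =>
      rw [Finset.sum_insert hj, ofAdd_add, map_mul]
      set A := MonoidAlgebra.of (ZMod 2) (Gk k) (Multiplicative.ofAdd (Pi.single j (g.toAdd j)))
      set B := MonoidAlgebra.of (ZMod 2) (Gk k)
        (Multiplicative.ofAdd (∑ i ∈ s, Pi.single i (g.toAdd i)))
      have hAB : A * B - 1 = (A - 1) * B + (B - 1) := by ring
      rw [hAB]
      refine Ideal.add_mem _ (Ideal.mul_mem_right _ _ ?_) ih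
      have hcase : g.toAdd j = 0 ∨ g.toAdd j = 1 := by
        have : ∀ b : ZMod 2, b = 0 ∨ b = 1 := by decide
        exact this _
      rcases hcase with h | h
      · have : A = 1 := by
          simp only [A, h, Pi.single_zero, ofAdd_zero, map_one]
        rw [this, sub_self]
        exact Ideal.zero_mem _
      · have : A - 1 = xgen k j := by
          simp only [A, h, xgen]
        rw [this]
        exact Ideal.subset_span ⟨j, rfl⟩
  have := key Finset.univ
  rwa [Finset.univ_sum_single g.toAdd, ofAdd_toAdd] at this

lemma augI_eq_span (k : ℕ) : augI k = Ideal.span (Set.range (xgen k)) := by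
  apply le_antisymm
  · intro f hf
    have hker : aug k f = 0 := hf
    have haug : (∑ g ∈ f.coeff.support, f.coeff g) = 0 := by
      have : aug k f = f.coeff.sum fun g b => b • ((1 : Gk k →* ZMod 2) g) := by
        simp [aug, MonoidAlgebra.lift_apply]
      simpa [Finsupp.sum, this] using hker
    have hrepr : f = ∑ g ∈ f.coeff.support, f.coeff g • MonoidAlgebra.of (ZMod 2) (Gk k) g := by
      conv_lhs => rw [← MonoidAlgebra.ofCoeff_coeff f, ← Finsupp.sum_single f.coeff]
      rw [MonoidAlgebra.ofCoeff_finsuppSum, Finsupp.sum]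
      refine Finset.sum_congr rfl fun g _ => ?_
      rw [MonoidAlgebra.of_apply, MonoidAlgebra.smul_single', mul_one, MonoidAlgebra.ofCoeff_single]
    have hf2 : f = ∑ g ∈ f.coeff.support, f.coeff g • (MonoidAlgebra.of (ZMod 2) (Gk k) g - 1) := by
      have hexp : ∑ g ∈ f.coeff.support, f.coeff g • (MonoidAlgebra.of (ZMod 2) (Gk k) g - 1)
          = (∑ g ∈ f.coeff.support, f.coeff g • MonoidAlgebra.of (ZMod 2) (Gk k) g)
            - (∑ g ∈ f.coeff.support, f.coeff g) • (1 : Ak k) := by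
        rw [Finset.sum_smul, ← Finset.sum_sub_distrib]
        exact Finset.sum_congr rfl fun g _ => smul_sub _ _ _
      rw [hexp, haug, zero_smul, sub_zero, ← hrepr]
    rw [hf2]
    exact Submodule.sum_mem _ fun g _ =>
      Submodule.smul_of_tower_mem _ _ (of_sub_one_mem_span k g)
  · rw [Ideal.span_le]
    rintro _ ⟨i, rfl⟩
    show aug k (xgen k i) = 0
    rw [xgen, map_sub, aug_of, map_one, sub_self]

/-- The `(k+1)`-st power of the augmentation ideal vanishes: `I^(k+1) = 0`. -/
theorem pow_succ_augI_eq_bot (k : ℕ) : augI k ^ (k + 1) = ⊥ := by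
  rw [augI_eq_span, eq_bot_iff, ← Ideal.submodule_span_eq, Submodule.span_pow,
    Submodule.span_le]
  intro a ha
  rw [Set.mem_pow] at ha
  obtain ⟨f, hf⟩ := ha
  choose p hp using fun j => (f j).2
  obtain ⟨j1, j2, hne, hpe⟩ : ∃ j1 j2, j1 ≠ j2 ∧ p j1 = p j2 := by
    have hcard : Fintype.card (Fin k) < Fintype.card (Fin (k + 1)) := by simp
    obtain ⟨j1, j2, hne, h⟩ := Fintype.exists_ne_map_eq_of_card_lt p hcard
    exact ⟨j1, j2, hne, h⟩
  have hprod : a = ∏ j, xgen k (p j) := by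
    rw [← hf, List.prod_ofFn]
    exact Finset.prod_congr rfl fun j _ => (hp j).symm
  have : (∏ j, xgen k (p j)) = 0 := by
    rw [← Finset.mul_prod_erase Finset.univ _ (Finset.mem_univ j1),
      ← Finset.mul_prod_erase _ _ (Finset.mem_erase.mpr ⟨hne.symm, Finset.mem_univ j2⟩),
      ← mul_assoc, hpe, show xgen k (p j2) * xgen k (p j2) = 0 from of_sub_one_sq k _, zero_mul]
  rw [hprod, this]
  exact (Submodule.mem_bot _).mpr rfl
end
end

section
/- Let k be a natural number, G = (ℤ/2ℤ)^k, A = F₂[G] its group algebra over F₂, and I ⊆ A the augmentation ideal. For every q with 0 ≤ q ≤ k, the quotient I^q / I^{q+1} is an F₂-vector space of dimension equal to the binomial coefficient C(k, q). (Here I^0 = A.) -/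
/-!
Setting: `Gk k = (ℤ/2ℤ)^k` written multiplicatively; `Ak k = F₂[Gk k]` its group algebra over
`F₂ = ZMod 2`; `aug` the augmentation homomorphism and `augI` the augmentation ideal.
The quotient `I^q / I^{q+1}` is realized as the quotient of the `F₂`-vector space `I^q`
by the `F₂`-subspace `I^{q+1}` (pulled back along the inclusion `I^q ⊆ A`).
-/

noncomputable section

namespace AugAux
open Finset

variable {k : ℕ}

lemma two_eq_zero : (1 + 1 : Ak k) = 0 := by
  have h : algebraMap (ZMod 2) (Ak k) (1 + 1) = 0 := by
    have : (1 + 1 : ZMod 2) = 0 := by decide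
    rw [this, map_zero]
  rw [← map_one (algebraMap (ZMod 2) (Ak k)), ← map_add]
  exact h

lemma add_self (a : Ak k) : a + a = 0 := by
  have : a + a = (1 + 1 : Ak k) * a := by ring
  rw [this, two_eq_zero, zero_mul]

def gv (v : Fin k → ZMod 2) : Ak k := MonoidAlgebra.of (ZMod 2) (Gk k) (Multiplicative.ofAdd v)

lemma gv_add (v w : Fin k → ZMod 2) : gv (v + w) = gv v * gv w := by
  unfold gv; rw [← map_mul]; rfl

lemma gv_zero : gv (k := k) 0 = 1 := map_one _

def xi (i : Fin k) : Ak k := gv (Pi.single i 1) + 1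

def xS (S : Finset (Fin k)) : Ak k := ∏ i ∈ S, xi i

lemma xi_sq (i : Fin k) : xi i * xi i = 0 := by
  have h1 : gv (k := k) (Pi.single i 1) * gv (Pi.single i 1) = 1 := by
    rw [← gv_add, ← Pi.single_add]
    have : (1 + 1 : ZMod 2) = 0 := by decide
    rw [this, Pi.single_zero, gv_zero]
  unfold xi
  set g := gv (k := k) (Pi.single i 1)
  have : (g + 1) * (g + 1) = g * g + (g + g) + 1 := by ring
  rw [this, h1, add_self, add_zero, two_eq_zero]

def suppF (v : Fin k → ZMod 2) : Finset (Fin k) := Finset.univ.filter (fun i => v i = 1)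

lemma sum_single_suppF (v : Fin k → ZMod 2) :
    ∑ i ∈ suppF v, Pi.single i (1 : ZMod 2) = v := by
  funext j
  rw [Finset.sum_apply, Finset.sum_pi_single]
  have hz : ∀ x : ZMod 2, x = 0 ∨ x = 1 := by decide
  by_cases h : v j = 1
  · simp [suppF, h]
  · have : v j = 0 := (hz (v j)).resolve_right h
    simp [suppF, h, this]

lemma gv_sum {ι : Type*} (s : Finset ι) (f : ι → (Fin k → ZMod 2)) :
    gv (∑ i ∈ s, f i) = ∏ i ∈ s, gv (f i) := by
  classical
  induction s using Finset.induction_on with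
  | empty => simp [gv_zero]
  | insert _ _ h ih => rw [Finset.sum_insert h, Finset.prod_insert h, gv_add, ih]

lemma gv_single (i : Fin k) : gv (Pi.single i 1) = xi i + 1 := by
  rw [xi, add_assoc, two_eq_zero, add_zero]

lemma gv_eq_sum (v : Fin k → ZMod 2) :
    gv v = ∑ T ∈ (suppF v).powerset, xS T := by
  conv_lhs => rw [← sum_single_suppF v]
  rw [gv_sum]
  have : ∀ i ∈ suppF v, gv (Pi.single i (1 : ZMod 2)) = xi i + 1 := fun i _ => gv_single i
  rw [Finset.prod_congr rfl this, Finset.prod_add]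
  simp [xS]

lemma xS_mul_disjoint {S T : Finset (Fin k)} (h : Disjoint S T) :
    xS S * xS T = xS (S ∪ T) := (Finset.prod_union h).symm

lemma xS_mul_not_disjoint {S T : Finset (Fin k)} (h : ¬ Disjoint S T) :
    xS S * xS T = 0 := by
  obtain ⟨i, hiS, hiT⟩ := Finset.not_disjoint_iff.mp h
  rw [xS, xS, ← Finset.mul_prod_erase _ _ hiS, ← Finset.mul_prod_erase _ _ hiT,
    mul_mul_mul_comm, xi_sq, zero_mul]

lemma gv_mem_span (v : Fin k → ZMod 2) :
    gv v ∈ Submodule.span (ZMod 2) (Set.range (xS (k := k))) := by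
  rw [gv_eq_sum]
  exact Submodule.sum_mem _ fun T _ => Submodule.subset_span ⟨T, rfl⟩

lemma top_le_span :
    (⊤ : Submodule (ZMod 2) (Ak k)) ≤ Submodule.span (ZMod 2) (Set.range (xS (k := k))) := by
  intro a _
  have ha : a = Finsupp.sum a.coeff (fun g c => c • gv (Multiplicative.toAdd g)) := by
    conv_lhs => rw [← MonoidAlgebra.sum_coeff_single a]
    refine Finsupp.sum_congr fun g _ => ?_
    have : gv (k := k) (Multiplicative.toAdd g) = MonoidAlgebra.single g 1 := rfl
    rw [this, MonoidAlgebra.smul_single, smul_eq_mul, mul_one]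
  rw [ha]
  exact Submodule.sum_mem _ fun g _ => Submodule.smul_mem _ _ (gv_mem_span _)

lemma aug_gv (v : Fin k → ZMod 2) : aug k (gv v) = 1 := by
  rw [gv, aug]
  simp

lemma xi_mem_augI (i : Fin k) : xi i ∈ augI k := by
  have : aug k (xi i) = 0 := by
    rw [xi, map_add, aug_gv, map_one]
    decide
  exact this

lemma xS_mem_pow (S : Finset (Fin k)) : xS S ∈ augI k ^ S.card := by
  classical
  induction S using Finset.induction_on with
  | empty => simp [xS, Ideal.one_eq_top]
  | @insert a s ha ih =>
      rw [Finset.card_insert_of_notMem ha, xS, Finset.prod_insert ha, mul_comm, pow_succ]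
      exact Ideal.mul_mem_mul ih (xi_mem_augI a)

lemma finrank_Ak : Module.finrank (ZMod 2) (Ak k) = 2 ^ k := by
  have h : Module.finrank (ZMod 2) (Ak k) = Module.finrank (ZMod 2) (Gk k →₀ ZMod 2) :=
    (MonoidAlgebra.coeffLinearEquiv (ZMod 2)).finrank_eq
  rw [h, Module.finrank_finsupp_self]
  simp [Gk]

instance : FiniteDimensional (ZMod 2) (Ak k) :=
  Module.Finite.of_basis (MonoidAlgebra.basis (Gk k) (ZMod 2))

lemma xS_li : LinearIndependent (ZMod 2) (xS (k := k)) := by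
  apply linearIndependent_of_top_le_span_of_card_eq_finrank top_le_span
  rw [finrank_Ak, Fintype.card_finset, Fintype.card_fin]

def V (k q : ℕ) : Submodule (ZMod 2) (Ak k) :=
  Submodule.span (ZMod 2) (xS '' {S : Finset (Fin k) | q ≤ S.card})

lemma xS_mem_V {q : ℕ} {S : Finset (Fin k)} (h : q ≤ S.card) : xS S ∈ V k q :=
  Submodule.subset_span ⟨S, h, rfl⟩

lemma V_le (q : ℕ) : V k q ≤ (augI k ^ q).restrictScalars (ZMod 2) := by
  rw [V, Submodule.span_le]
  rintro _ ⟨S, hS, rfl⟩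
  exact Ideal.pow_le_pow_right hS (xS_mem_pow S)

lemma aug_apply (a : Ak k) : aug k a = ∑ g ∈ a.coeff.support, a.coeff g := by
  rw [aug, MonoidAlgebra.lift_apply]
  simp [Finsupp.sum]

lemma augI_le_span (a : Ak k) (ha : a ∈ augI k) :
    a ∈ Submodule.span (ZMod 2)
      (Set.range (fun g : Gk k => (MonoidAlgebra.of (ZMod 2) (Gk k) g + 1 : Ak k))) := by
  have haug : aug k a = 0 := ha
  have key : a = ∑ g ∈ a.coeff.support, a.coeff g • (MonoidAlgebra.of (ZMod 2) (Gk k) g + 1 : Ak k) := by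
    have h1 : ∑ g ∈ a.coeff.support, a.coeff g • (MonoidAlgebra.of (ZMod 2) (Gk k) g + 1 : Ak k)
        = (∑ g ∈ a.coeff.support, a.coeff g • (MonoidAlgebra.of (ZMod 2) (Gk k) g : Ak k))
          + (∑ g ∈ a.coeff.support, a.coeff g) • (1 : Ak k) := by
      rw [Finset.sum_smul, ← Finset.sum_add_distrib]
      exact Finset.sum_congr rfl fun g _ => by rw [smul_add]
    rw [h1, ← aug_apply, haug, zero_smul, add_zero]
    have h2 : ∀ g ∈ a.coeff.support, a.coeff g • (MonoidAlgebra.of (ZMod 2) (Gk k) g : Ak k)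
        = MonoidAlgebra.single g (a.coeff g) := by
      intro g _
      have : (MonoidAlgebra.of (ZMod 2) (Gk k) g : Ak k) = MonoidAlgebra.single g 1 := rfl
      rw [this, MonoidAlgebra.smul_single, smul_eq_mul, mul_one]
    rw [Finset.sum_congr rfl h2]
    exact (MonoidAlgebra.sum_coeff_single a).symm
  rw [key]
  exact Submodule.sum_mem _ fun g _ => Submodule.smul_mem _ _ (Submodule.subset_span ⟨g, rfl⟩)

lemma gv_add_one (v : Fin k → ZMod 2) :
    gv v + 1 = ∑ T ∈ ((suppF v).powerset).erase ∅, xS T := by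
  have hmem : (∅ : Finset (Fin k)) ∈ (suppF v).powerset := Finset.empty_mem_powerset _
  have := Finset.add_sum_erase _ xS hmem
  rw [gv_eq_sum, ← this]
  have hx : xS (∅ : Finset (Fin k)) = 1 := Finset.prod_empty
  rw [hx, add_assoc, add_left_comm, two_eq_zero, add_zero]

lemma gen_mul_mem {q : ℕ} (T : Finset (Fin k)) (hT : q ≤ T.card) (g : Gk k) :
    xS T * (MonoidAlgebra.of (ZMod 2) (Gk k) g + 1) ∈ V k (q + 1) := by
  have hg : (MonoidAlgebra.of (ZMod 2) (Gk k) g : Ak k) = gv (Multiplicative.toAdd g) := rfl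
  rw [hg, gv_add_one, Finset.mul_sum]
  refine Submodule.sum_mem _ fun S hS => ?_
  have hSne : S ≠ ∅ := Finset.ne_of_mem_erase hS
  by_cases hdisj : Disjoint T S
  · rw [xS_mul_disjoint hdisj]
    apply xS_mem_V
    rw [Finset.card_union_of_disjoint hdisj]
    have : 1 ≤ S.card := Finset.card_pos.mpr (Finset.nonempty_of_ne_empty hSne)
    omega
  · rw [xS_mul_not_disjoint hdisj]
    exact Submodule.zero_mem _

lemma pow_le_V (q : ℕ) : (augI k ^ q).restrictScalars (ZMod 2) ≤ V k q := by
  induction q with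
  | zero =>
      intro x _
      have : V k 0 = Submodule.span (ZMod 2) (Set.range (xS (k := k))) := by
        rw [V]
        congr 1
        rw [show {S : Finset (Fin k) | 0 ≤ S.card} = Set.univ from by ext; simp,
          Set.image_univ]
      rw [this]
      exact top_le_span trivial
  | succ q ih =>
      intro x hx
      have hx' : x ∈ augI k ^ q * augI k := by rwa [← pow_succ]
      refine Submodule.mul_induction_on hx' ?_ (fun a b ha hb => Submodule.add_mem _ ha hb)
      intro m hm n hn
      have hm' : m ∈ V k q := ih hm
      have hn' := augI_le_span n hn
      clear hm hn hx hx'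
      induction hn' using Submodule.span_induction with
      | mem n hgen =>
          obtain ⟨g, rfl⟩ := hgen
          induction hm' using Submodule.span_induction with
          | mem m hmgen =>
              obtain ⟨T, hT, rfl⟩ := hmgen
              exact gen_mul_mem T hT g
          | zero => rw [zero_mul]; exact Submodule.zero_mem _
          | add a b _ _ ha hb => rw [add_mul]; exact Submodule.add_mem _ ha hb
          | smul c a _ ha => rw [smul_mul_assoc]; exact Submodule.smul_mem _ _ ha
      | zero => rw [mul_zero]; exact Submodule.zero_mem _
      | add a b _ _ ha hb => rw [mul_add]; exact Submodule.add_mem _ ha hb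
      | smul c a _ ha => rw [mul_smul_comm]; exact Submodule.smul_mem _ _ ha

lemma pow_eq_V (q : ℕ) : (augI k ^ q).restrictScalars (ZMod 2) = V k q :=
  le_antisymm (pow_le_V q) (V_le q)

lemma finrank_V (q : ℕ) :
    Module.finrank (ZMod 2) (V k q) = Fintype.card {S : Finset (Fin k) // q ≤ S.card} := by
  have hli : LinearIndependent (ZMod 2)
      (fun s : {S : Finset (Fin k) // q ≤ S.card} => xS s.1) :=
    xS_li.comp Subtype.val Subtype.val_injective
  have hV : V k q = Submodule.span (ZMod 2)
      (Set.range fun s : {S : Finset (Fin k) // q ≤ S.card} => xS s.1) := by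
    rw [V, Set.image_eq_range]
    rfl
  rw [hV]
  exact finrank_span_eq_card hli

lemma card_split (q : ℕ) :
    Fintype.card {S : Finset (Fin k) // q ≤ S.card}
      = Fintype.card {S : Finset (Fin k) // q + 1 ≤ S.card} + Nat.choose k q := by
  have h1 : Fintype.card {S : Finset (Fin k) // q ≤ S.card}
      = Fintype.card {S : Finset (Fin k) // q + 1 ≤ S.card ∨ S.card = q} :=
    Fintype.card_congr (Equiv.subtypeEquivRight (fun S => by omega))
  rw [h1, Fintype.card_subtype_or_disjoint _ _
    (by rw [Pi.disjoint_iff]; intro S; simp [Prop.disjoint_iff]; omega)]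
  congr 1
  have h2 : Fintype.card {s : Finset (Fin k) // s.card = q} = Nat.choose k q := by
    simpa using Fintype.card_finset_len (α := Fin k) q
  exact h2

end AugAux

set_option synthInstance.maxHeartbeats 1000000 in
open AugAux in
/-- For `0 ≤ q ≤ k`, the `F₂`-vector space `I^q / I^{q+1}` has dimension `C(k, q)`. -/
theorem finrank_pow_augI_quotient (k q : ℕ) (hq : q ≤ k) :
    Module.finrank (ZMod 2)
      (↥((augI k ^ q).restrictScalars (ZMod 2)) ⧸
        (((augI k ^ (q + 1)).restrictScalars (ZMod 2)).comap
          ((augI k ^ q).restrictScalars (ZMod 2)).subtype)) = Nat.choose k q := by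
  set M := (augI k ^ q).restrictScalars (ZMod 2) with hM
  set N := (augI k ^ (q + 1)).restrictScalars (ZMod 2) with hN
  have hle : N ≤ M := fun x hx => Ideal.pow_le_pow_right (Nat.le_succ q) hx
  have hMfr : Module.finrank (ZMod 2) M = Fintype.card {S : Finset (Fin k) // q ≤ S.card} := by
    rw [hM, pow_eq_V, finrank_V]
  have hNfr : Module.finrank (ZMod 2) N
      = Fintype.card {S : Finset (Fin k) // q + 1 ≤ S.card} := by
    rw [hN, pow_eq_V, finrank_V]
  have hcomap : Module.finrank (ZMod 2) (N.comap M.subtype) = Module.finrank (ZMod 2) N :=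
    (Submodule.comapSubtypeEquivOfLe hle).finrank_eq
  have key := Submodule.finrank_quotient_add_finrank (N.comap M.subtype)
  rw [hcomap, hMfr, hNfr, card_split q] at key
  omega


end
end

section
/- Let k be a natural number, G = (ℤ/2ℤ)^k with standard generators t_1, …, t_k, A = F₂[G] its group algebra over F₂, and I ⊆ A the augmentation ideal. For every q with 0 ≤ q ≤ k, the residue classes modulo I^{q+1} of the elements [T_S] = Σ_{g ∈ T_S} g, where S ranges over the subsets of {1,…,k} with |S| = q, form a basis of the F₂-vector space I^q / I^{q+1}. -/
/-!
Setting: `Gk k = (ℤ/2ℤ)^k` written multiplicatively, with standard generators `tgen i`;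
`Ak k = F₂[Gk k]` its group algebra over `F₂ = ZMod 2`; `aug` the augmentation homomorphism;
`augI` the augmentation ideal; `TS S` the subgroup generated by `{tgen i : i ∈ S}` and
`sumTS S = ∑ g ∈ TS S, g` its element sum in the group algebra.

The quotient `I^q / I^{q+1}` is realized as the image of `I^q` under the quotient map
`A → A / I^{q+1}` (of `F₂`-vector spaces); the statement says that the residue classes of the
elements `[T_S]` with `|S| = q` form an `F₂`-basis of it.
-/

noncomputable section

/-- The standard generator `t_i`: the element whose `i`-th coordinate is the nontrivial
element and all other coordinates are trivial. -/
def tgen {k : ℕ} (i : Fin k) : Gk k := Multiplicative.ofAdd (Pi.single i 1)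

/-- The subgroup `T_S` generated by `{t_i : i ∈ S}`. -/
def TS {k : ℕ} (S : Finset (Fin k)) : Subgroup (Gk k) :=
  Subgroup.closure (tgen '' (S : Set (Fin k)))

/-- `[T_S] = ∑_{g ∈ T_S} g`, the sum of the elements of `T_S` in the group algebra. -/
def sumTS {k : ℕ} (S : Finset (Fin k)) : Ak k :=
  haveI : Fintype (TS S) := Fintype.ofFinite _
  ∑ g : TS S, MonoidAlgebra.single (g : Gk k) (1 : ZMod 2)

namespace Aug
variable {k : ℕ}

/-- indicator group element -/
def gS (S : Finset (Fin k)) : Gk k :=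
  Multiplicative.ofAdd (fun i => if i ∈ S then 1 else 0)

lemma gS_prod (S : Finset (Fin k)) : gS S = ∏ i ∈ S, tgen i := by
  apply Multiplicative.toAdd.injective
  rw [toAdd_prod]
  funext j
  simp [gS, tgen, Finset.sum_apply, Finset.sum_pi_single']

lemma gS_inj : Function.Injective (gS (k := k)) := by
  intro S T h
  ext j
  have := congrFun (Multiplicative.ofAdd.injective h) j
  by_cases hS : j ∈ S <;> by_cases hT : j ∈ T <;> simp_all [gS]

lemma gS_surj : Function.Surjective (gS (k := k)) := by
  intro g
  refine ⟨Finset.univ.filter (fun i => g.toAdd i = 1), ?_⟩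
  apply Multiplicative.toAdd.injective
  funext j
  simp only [gS, toAdd_ofAdd, Finset.mem_filter, Finset.mem_univ, true_and]
  have : ∀ a : ZMod 2, a = 0 ∨ a = 1 := by decide
  rcases this (g.toAdd j) with h | h <;> simp [h]

lemma gS_mul (S T : Finset (Fin k)) : gS S * gS T = gS (symmDiff S T) := by
  apply Multiplicative.toAdd.injective
  funext j
  simp only [toAdd_mul, gS, toAdd_ofAdd, Pi.add_apply, Finset.mem_symmDiff]
  by_cases hS : j ∈ S <;> by_cases hT : j ∈ T <;> simp [hS, hT] <;> decide


lemma gS_insert {a : Fin k} {S : Finset (Fin k)} (h : a ∉ S) :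
    gS (insert a S) = tgen a * gS S := by
  rw [gS_prod, gS_prod, Finset.prod_insert h]

/-- membership description of `TS` -/
lemma mem_TS {S : Finset (Fin k)} {g : Gk k} :
    g ∈ TS S ↔ ∃ S' ⊆ S, gS S' = g := by
  constructor
  · intro hg
    refine Subgroup.closure_induction ?_ ?_ ?_ ?_ hg
    · rintro x ⟨i, hi, rfl⟩
      exact ⟨{i}, by simpa using hi, by rw [gS_prod]; simp⟩
    · exact ⟨∅, by simp, by rw [gS_prod]; simp⟩
    · rintro x y - - ⟨Sx, hSx, rfl⟩ ⟨Sy, hSy, rfl⟩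
      exact ⟨symmDiff Sx Sy, le_trans symmDiff_le_sup (sup_le hSx hSy), (gS_mul _ _).symm⟩
    · rintro x - ⟨Sx, hSx, rfl⟩
      refine ⟨Sx, hSx, ?_⟩
      have : gS Sx * gS Sx = 1 := by rw [gS_mul]; simp [gS]; rfl
      rw [inv_eq_of_mul_eq_one_right this]
  · rintro ⟨S', hS', rfl⟩
    rw [gS_prod]
    exact Subgroup.prod_mem _ (fun i hi => Subgroup.subset_closure ⟨i, hS' hi, rfl⟩)

/-- equivalence between powerset and TS -/
def eTS (S : Finset (Fin k)) : {S' : Finset (Fin k) // S' ⊆ S} ≃ TS S where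
  toFun S' := ⟨gS S'.1, mem_TS.2 ⟨S'.1, S'.2, rfl⟩⟩
  invFun g := ⟨(mem_TS.1 g.2).choose, (mem_TS.1 g.2).choose_spec.1⟩
  left_inv S' := by
    have h := (mem_TS.1 (mem_TS.2 ⟨S'.1, S'.2, rfl⟩ : gS S'.1 ∈ TS S)).choose_spec.2
    exact Subtype.ext (gS_inj h)
  right_inv g := Subtype.ext (mem_TS.1 g.2).choose_spec.2

lemma sumTS_eq (S : Finset (Fin k)) :
    sumTS S = ∑ S' ∈ S.powerset, MonoidAlgebra.single (gS S') (1 : ZMod 2) := by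
  have h1 : ∑ S' ∈ S.powerset, MonoidAlgebra.single (gS S') (1 : ZMod 2)
      = ∑ S' : {S' : Finset (Fin k) // S' ⊆ S}, MonoidAlgebra.single (gS S'.1) (1 : ZMod 2) :=
    Finset.sum_subtype _ (fun x => Finset.mem_powerset) _
  have key : ∀ (inst : Fintype (TS S)),
      (∑ g ∈ (@Finset.univ _ inst), MonoidAlgebra.single (g : Gk k) (1 : ZMod 2))
        = ∑ S' ∈ S.powerset, MonoidAlgebra.single (gS S') (1 : ZMod 2) := by
    intro inst
    rw [h1]
    refine Fintype.sum_equiv (eTS S).symm _ _ fun g => ?_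
    exact congrArg (fun a => MonoidAlgebra.single a (1 : ZMod 2))
      ((mem_TS.1 g.2).choose_spec.2).symm
  rw [sumTS]
  exact key _

def Tg (i : Fin k) : Ak k := MonoidAlgebra.of (ZMod 2) (Gk k) (tgen i)

def xS (S : Finset (Fin k)) : Ak k := ∏ i ∈ S, (Tg i + 1)

lemma xS_eq_sum (S : Finset (Fin k)) :
    xS S = ∑ S' ∈ S.powerset, MonoidAlgebra.single (gS S') (1 : ZMod 2) := by
  rw [xS, Finset.prod_add]
  apply Finset.sum_congr rfl
  intro S' hS'
  simp only [Finset.prod_const_one, mul_one, Tg,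
    ← map_prod (MonoidAlgebra.of (ZMod 2) (Gk k)), ← gS_prod]
  rfl

lemma sumTS_eq_xS (S : Finset (Fin k)) : sumTS S = xS S := by
  rw [sumTS_eq, xS_eq_sum]

lemma add_self (a : Ak k) : a + a = 0 := by
  have h : (1 : Ak k) + 1 = 0 := by
    have h2 : ((1 : ZMod 2) + 1 : ZMod 2) = 0 := by decide
    rw [← map_one (algebraMap (ZMod 2) (Ak k)), ← map_add, h2, map_zero]
  calc a + a = (1 + 1) * a := by ring
  _ = 0 := by rw [h, zero_mul]

lemma tgen_mul_self (i : Fin k) : tgen i * tgen i = 1 := by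
  apply Multiplicative.toAdd.injective
  rw [toAdd_mul, toAdd_one]
  simp only [tgen, toAdd_ofAdd, ← Pi.single_add]
  have h2 : (1 + 1 : ZMod 2) = 0 := by decide
  rw [h2, Pi.single_zero]

lemma Tg_mul_self (i : Fin k) : Tg i * Tg i = 1 := by
  rw [Tg, ← map_mul, tgen_mul_self, map_one]

lemma factor_sq (i : Fin k) : (Tg i + 1) * (Tg i + 1) = 0 := by
  have : (Tg i + 1) * (Tg i + 1) = Tg i * Tg i + (Tg i + Tg i) + 1 := by ring
  rw [this, Tg_mul_self, add_self, add_zero, add_self]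

lemma xS_mul_of_disjoint {S S' : Finset (Fin k)} (h : Disjoint S S') :
    xS S * xS S' = xS (S ∪ S') := (Finset.prod_union h).symm

lemma xS_mul_of_mem {S S' : Finset (Fin k)} {i : Fin k} (hi : i ∈ S) (hi' : i ∈ S') :
    xS S * xS S' = 0 := by
  rw [xS, xS, ← Finset.mul_prod_erase _ _ hi, ← Finset.mul_prod_erase _ _ hi']
  calc (Tg i + 1) * (∏ j ∈ S.erase i, (Tg j + 1)) *
        ((Tg i + 1) * ∏ j ∈ S'.erase i, (Tg j + 1))
      = (Tg i + 1) * (Tg i + 1) *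
        ((∏ j ∈ S.erase i, (Tg j + 1)) * ∏ j ∈ S'.erase i, (Tg j + 1)) := by ring
  _ = 0 := by rw [factor_sq, zero_mul]

lemma aug_Tg (i : Fin k) : aug k (Tg i) = 1 := by
  simp [aug, Tg]

lemma factor_mem (i : Fin k) : Tg i + 1 ∈ augI k := by
  have : aug k (Tg i + 1) = 0 := by
    rw [map_add, aug_Tg, map_one]; decide
  exact this

lemma xS_mem_pow (S : Finset (Fin k)) : xS S ∈ augI k ^ S.card := by
  classical
  induction S using Finset.induction_on with
  | empty => simp [xS]
  | @insert a S ha ih =>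
    rw [xS, Finset.prod_insert ha, Finset.card_insert_of_notMem ha, pow_succ']
    exact Ideal.mul_mem_mul (factor_mem a) ih

lemma xS_mem_pow_of_le {q : ℕ} {S : Finset (Fin k)} (h : q ≤ S.card) :
    xS S ∈ augI k ^ q :=
  Ideal.pow_le_pow_right h (xS_mem_pow S)

def bG : Module.Basis (Gk k) (ZMod 2) (Ak k) := MonoidAlgebra.basis (Gk k) (ZMod 2)

def eG : Finset (Fin k) ≃ Gk k := Equiv.ofBijective gS ⟨gS_inj, gS_surj⟩

/-- the group-element basis indexed by finsets -/
def bT : Module.Basis (Finset (Fin k)) (ZMod 2) (Ak k) := bG.reindex eG.symm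

lemma bT_apply (S : Finset (Fin k)) : bT S = MonoidAlgebra.single (gS S) 1 := by
  rw [bT, Module.Basis.reindex_apply, Equiv.symm_symm, bG]
  exact MonoidAlgebra.basis_apply (ZMod 2) _

lemma sum_xS (S : Finset (Fin k)) :
    ∑ S' ∈ S.powerset, xS S' = MonoidAlgebra.single (gS S) (1 : ZMod 2) := by
  classical
  induction S using Finset.induction_on with
  | empty =>
    rw [Finset.powerset_empty, Finset.sum_singleton, xS, Finset.prod_empty, gS_prod,
      Finset.prod_empty, MonoidAlgebra.one_def]
  | @insert a S ha ih =>
    have hdisj : Disjoint S.powerset (Finset.image (insert a) S.powerset) := by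
      rw [Finset.disjoint_right]
      intro x hx hx'
      obtain ⟨y, hy, rfl⟩ := Finset.mem_image.1 hx
      exact ha (Finset.mem_powerset.1 hx' (Finset.mem_insert_self a y))
    have hinj : ∀ x ∈ S.powerset, ∀ y ∈ S.powerset, insert a x = insert a y → x = y := by
      intro x hx y hy hxy
      have hax : a ∉ x := fun h => ha (Finset.mem_powerset.1 hx h)
      have hay : a ∉ y := fun h => ha (Finset.mem_powerset.1 hy h)
      rw [← Finset.erase_insert hax, hxy, Finset.erase_insert hay]
    have h2 : ∀ S' ∈ S.powerset, xS (insert a S') = (Tg a + 1) * xS S' := by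
      intro S' hS'
      have haS' : a ∉ S' := fun h => ha (Finset.mem_powerset.1 hS' h)
      rw [xS, Finset.prod_insert haS', xS]
    have h3 : Tg a * MonoidAlgebra.single (gS S) (1 : ZMod 2)
        = MonoidAlgebra.single (gS (insert a S)) 1 := by
      rw [Tg, MonoidAlgebra.of_apply, MonoidAlgebra.single_mul_single, one_mul, gS_insert ha]
    rw [Finset.powerset_insert, Finset.sum_union hdisj, Finset.sum_image hinj,
      Finset.sum_congr rfl h2, ← Finset.mul_sum, ih, add_mul, one_mul, ← h3]
    set X := MonoidAlgebra.single (gS S) (1 : ZMod 2) with hX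
    calc X + (Tg a * X + X) = Tg a * X + (X + X) := by ring
    _ = Tg a * X := by rw [add_self, add_zero]

lemma xS_eq_sum_bT (S : Finset (Fin k)) : xS S = ∑ S' ∈ S.powerset, bT S' := by
  rw [xS_eq_sum]
  exact Finset.sum_congr rfl fun S' _ => (bT_apply S').symm

def phi : Ak k →ₗ[ZMod 2] Ak k := (bT.constr (ZMod 2)) xS

lemma phi_bT (S : Finset (Fin k)) : phi (bT S) = xS S := bT.constr_basis _ _ _

lemma phi_xS (S : Finset (Fin k)) : phi (xS S) = bT S := by
  rw [xS_eq_sum_bT, map_sum]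
  calc ∑ S' ∈ S.powerset, phi (bT S') = ∑ S' ∈ S.powerset, xS S' :=
    Finset.sum_congr rfl fun S' _ => phi_bT S'
  _ = bT S := by rw [sum_xS, bT_apply]

lemma phi_phi : (phi (k := k)).comp phi = LinearMap.id := by
  apply bT.ext
  intro S
  simp only [LinearMap.comp_apply, LinearMap.id_apply, phi_bT, phi_xS]

def eX : Ak k ≃ₗ[ZMod 2] Ak k := LinearEquiv.ofLinear phi phi phi_phi phi_phi

/-- the basis of the `xS` -/
def bX : Module.Basis (Finset (Fin k)) (ZMod 2) (Ak k) := bT.map eX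

lemma bX_apply (S : Finset (Fin k)) : bX S = xS S := by
  rw [bX, Module.Basis.map_apply]
  exact phi_bT S

lemma aug_xS_empty : aug k (xS (∅ : Finset (Fin k))) = 1 := by
  rw [xS, Finset.prod_empty, map_one]

lemma aug_factor (i : Fin k) : aug k (Tg i + 1) = 0 := factor_mem i

lemma aug_xS_nonempty {S : Finset (Fin k)} (h : S.Nonempty) : aug k (xS S) = 0 := by
  obtain ⟨i, hi⟩ := h
  rw [xS, map_prod]
  exact Finset.prod_eq_zero hi (aug_factor i)

lemma aug_xS (S : Finset (Fin k)) :
    aug k (xS S) = if S = ∅ then 1 else 0 := by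
  rcases eq_or_ne S ∅ with rfl | h
  · rw [aug_xS_empty, if_pos rfl]
  · rw [aug_xS_nonempty (Finset.nonempty_iff_ne_empty.2 h), if_neg h]

/-- The repr of `a` in the `xS`-basis at `∅` is `aug a`. -/
lemma repr_empty (a : Ak k) : bX.repr a ∅ = aug k a := by
  classical
  conv_rhs => rw [← bX.sum_repr a]
  rw [map_sum]
  rw [Finset.sum_congr rfl (fun S (_ : S ∈ Finset.univ) => by
    rw [map_smul, bX_apply, aug_xS S] :
      ∀ S ∈ Finset.univ, aug k (bX.repr a S • bX S)
        = bX.repr a S • (if S = ∅ then (1 : ZMod 2) else 0))]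
  rw [Finset.sum_eq_single (∅ : Finset (Fin k))]
  · rw [if_pos rfl, smul_eq_mul, mul_one]
  · intro b _ hb
    rw [if_neg hb, smul_zero]
  · intro h
    exact absurd (Finset.mem_univ _) h

/-- the span of the `xS` with `q ≤ |S|` -/
def sp (q : ℕ) : Submodule (ZMod 2) (Ak k) :=
  Submodule.span (ZMod 2) (xS '' {S : Finset (Fin k) | q ≤ S.card})

lemma sp_eq_span_bX (q : ℕ) :
    sp (k := k) q = Submodule.span (ZMod 2) (bX '' {S : Finset (Fin k) | q ≤ S.card}) := by
  rw [sp, Set.image_congr (fun S _ => (bX_apply S).symm)]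

lemma mem_sp_iff {q : ℕ} {a : Ak k} :
    a ∈ sp q ↔ ∀ S ∈ (bX.repr a).support, q ≤ S.card := by
  rw [sp_eq_span_bX, Module.Basis.mem_span_image]
  constructor
  · intro h S hS
    exact h hS
  · intro h S hS
    exact h S hS

lemma augI_le_sp1 : (augI k).restrictScalars (ZMod 2) ≤ sp 1 := by
  intro a ha
  have h0 : bX.repr a ∅ = 0 := by
    rw [repr_empty]
    exact ha
  rw [mem_sp_iff]
  intro S hS
  rcases Finset.eq_empty_or_nonempty S with rfl | h
  · exact absurd h0 (Finsupp.mem_support_iff.1 hS)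
  · exact h.card_pos

lemma sp_mul_le (q : ℕ) : (sp (k := k) q) * sp 1 ≤ sp (q + 1) := by
  rw [sp, sp, Submodule.span_mul_span]
  rw [Submodule.span_le]
  rintro z ⟨x, ⟨S, hS, rfl⟩, y, ⟨S', hS', rfl⟩, rfl⟩
  show xS S * xS S' ∈ (sp (q + 1) : Submodule (ZMod 2) (Ak k))
  by_cases hdisj : Disjoint S S'
  · rw [xS_mul_of_disjoint hdisj]
    apply Submodule.subset_span
    refine ⟨S ∪ S', ?_, rfl⟩
    rw [Set.mem_setOf_eq, Finset.card_union_of_disjoint hdisj]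
    exact add_le_add hS hS'
  · obtain ⟨i, hiS, hiS'⟩ := Finset.not_disjoint_iff.1 hdisj
    rw [xS_mul_of_mem hiS hiS']
    exact (sp (q+1)).zero_mem

lemma sp_zero_eq_top : sp (k := k) 0 = ⊤ := by
  rw [sp_eq_span_bX]
  have h : {S : Finset (Fin k) | 0 ≤ S.card} = Set.univ := by
    ext S; simp
  rw [h, Set.image_univ, Module.Basis.span_eq]

lemma restrict_eq (q : ℕ) : (augI k ^ q).restrictScalars (ZMod 2) = sp q := by
  apply le_antisymm
  · induction q with
    | zero => intro a _; rw [sp_zero_eq_top]; trivial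
    | succ q ih =>
      intro a ha
      have ha' : a ∈ augI k ^ q * augI k := by
        rw [← pow_succ]; exact ha
      refine Submodule.mul_induction_on ha' ?_ ?_
      · intro m hm n hn
        exact sp_mul_le q (Submodule.mul_mem_mul (ih hm) (augI_le_sp1 hn))
      · intro x y hx hy
        exact add_mem hx hy
  · rw [sp, Submodule.span_le]
    rintro z ⟨S, hS, rfl⟩
    exact xS_mem_pow_of_le hS
end Aug


open Aug

/-- For `0 ≤ q ≤ k`, the residue classes mod `I^{q+1}` of the elements `[T_S]`,
for `S` ranging over the `q`-element subsets of `{1,…,k}`, form a basis of the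
`F₂`-vector space `I^q / I^{q+1}`. -/
theorem basis_pow_augI_quotient (k q : ℕ) (hq : q ≤ k) :
    ∃ b : Module.Basis {S : Finset (Fin k) // S.card = q} (ZMod 2)
      (((augI k ^ q).restrictScalars (ZMod 2)).map
        ((augI k ^ (q + 1)).restrictScalars (ZMod 2)).mkQ),
      ∀ S : {S : Finset (Fin k) // S.card = q},
        (b S : Ak k ⧸ (augI k ^ (q + 1)).restrictScalars (ZMod 2)) =
          Submodule.Quotient.mk (sumTS S.1) := by
  classical
  set W := (augI k ^ (q + 1)).restrictScalars (ZMod 2) with hW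
  set v : {S : Finset (Fin k) // S.card = q} → (Ak k ⧸ W) :=
    fun S => W.mkQ (xS S.1) with hv
  have hli : LinearIndependent (ZMod 2) v := by
    rw [Fintype.linearIndependent_iff]
    intro c hc
    set y : Ak k := ∑ S : {S : Finset (Fin k) // S.card = q}, c S • xS S.1 with hy
    have hπy : W.mkQ y = 0 := by
      rw [hy, map_sum]
      simpa [hv] using hc
    have hyW : y ∈ W := by
      rwa [← Submodule.Quotient.mk_eq_zero W, ← Submodule.mkQ_apply]
    have hy1 : y ∈ Submodule.span (ZMod 2)
        (bX '' {S : Finset (Fin k) | q + 1 ≤ S.card}) := by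
      rw [← sp_eq_span_bX, ← restrict_eq]
      exact hyW
    have hy0 : y ∈ Submodule.span (ZMod 2)
        (bX '' {S : Finset (Fin k) | S.card = q}) := by
      rw [hy]
      refine Submodule.sum_mem _ fun S _ => Submodule.smul_mem _ _ ?_
      rw [← bX_apply]
      exact Submodule.subset_span ⟨S.1, S.2, rfl⟩
    rw [Module.Basis.mem_span_image] at hy1 hy0
    have hsupp : (bX.repr y).support = ∅ := by
      rw [Finset.eq_empty_iff_forall_notMem]
      intro S hS
      have h1 := hy1 hS
      have h0 := hy0 hS
      simp only [Set.mem_setOf_eq] at h1 h0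
      omega
    have hy0' : y = 0 := bX.repr.map_eq_zero_iff.1 (Finsupp.support_eq_empty.1 hsupp)
    intro i
    have hbli : LinearIndependent (ZMod 2)
        (fun S : {S : Finset (Fin k) // S.card = q} => bX S.1) :=
      bX.linearIndependent.comp Subtype.val Subtype.val_injective
    refine Fintype.linearIndependent_iff.1 hbli c ?_ i
    calc ∑ S : {S : Finset (Fin k) // S.card = q}, c S • bX S.1 = y := by
          rw [hy]
          exact Finset.sum_congr rfl fun S _ => by rw [bX_apply]
    _ = 0 := hy0'
  have heq : Submodule.span (ZMod 2) (Set.range v) =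
      ((augI k ^ q).restrictScalars (ZMod 2)).map W.mkQ := by
    apply le_antisymm
    · rw [Submodule.span_le]
      rintro z ⟨S, rfl⟩
      exact ⟨xS S.1, xS_mem_pow_of_le (le_of_eq S.2.symm), rfl⟩
    · rw [restrict_eq, sp, Submodule.map_span, Submodule.span_le]
      rintro z ⟨x, ⟨S, hS, rfl⟩, rfl⟩
      rcases Nat.eq_or_lt_of_le (show q ≤ S.card from hS) with heq' | hlt
      · exact Submodule.subset_span ⟨⟨S, heq'.symm⟩, rfl⟩
      · have hmem : xS S ∈ W := by
          rw [hW, restrict_eq]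
          exact Submodule.subset_span ⟨S, hlt, rfl⟩
        have hz : W.mkQ (xS S) = 0 := by
          rw [Submodule.mkQ_apply, Submodule.Quotient.mk_eq_zero]
          exact hmem
        show W.mkQ (xS S) ∈ Submodule.span (ZMod 2) (Set.range v)
        rw [hz]
        exact zero_mem _
  refine ⟨(Module.Basis.span hli).map (LinearEquiv.ofEq _ _ heq), fun S => ?_⟩
  rw [Module.Basis.map_apply, LinearEquiv.coe_ofEq_apply, Module.Basis.span_apply]
  show W.mkQ (xS S.1) = Submodule.Quotient.mk (sumTS S.1)
  rw [Submodule.mkQ_apply, sumTS_eq_xS]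

end
end
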